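/- arXiv:1608.04319 — 3 statements merged into one kernel-verified Lean document; each statement's English description precedes it below -/
import Mathlib

section
/- Let G be a finite simple graph with n vertices and m edges. Then NK(T1(G)) = 2^(n+m) · NK(G). -/
open Finset

variable {V : Type*}

/-- The Narumi–Katayama index: the product of the degrees of all vertices. -/
def NK {W : Type*} [Fintype W] (H : SimpleGraph W) [DecidableRel H.Adj] : ℕ :=
  ∏ v, H.degree v

/-- The first Zagreb index: the sum of the squares of the degrees. -/
def M1 [Fintype V] (G : SimpleGraph V) [DecidableRel G.Adj] : ℕ :=
  ∑ v, (G.degree v) ^ 2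

/-- The multiplicative sum Zagreb index: the product over the edges of `G` of the
sum of the degrees of the two endpoints. -/
def Pi1Star [Fintype V] [DecidableEq V] (G : SimpleGraph V) [DecidableRel G.Adj] : ℕ :=
  ∏ e ∈ G.edgeFinset,
    Sym2.lift ⟨fun u v => G.degree u + G.degree v, fun u v => by simp [Nat.add_comm]⟩ e

/-- A generic transformation graph on the vertex set `V(G) ∪ E(G)`, built from a
symmetric irreflexive relation `Rvv` between vertices, a symmetric irreflexive relation
`Ree` between edges, and an incidence relation `Rve` between vertices and edges. -/
def transGraph (G : SimpleGraph V) (Rvv : V → V → Prop) (Ree : Sym2 V → Sym2 V → Prop)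
    (Rve : V → Sym2 V → Prop)
    (hvv : Symmetric Rvv) (hvv' : Irreflexive Rvv)
    (hee : Symmetric Ree) (hee' : Irreflexive Ree) :
    SimpleGraph (V ⊕ G.edgeSet) where
  Adj a b :=
    match a, b with
    | Sum.inl u, Sum.inl v => Rvv u v
    | Sum.inr e, Sum.inr f => Ree e.1 f.1
    | Sum.inl u, Sum.inr e => Rve u e.1
    | Sum.inr e, Sum.inl u => Rve u e.1
  symm := by
    refine ⟨?_⟩
    rintro (u | e) (v | f) h
    · exact hvv h
    · exact h
    · exact h
    · exact hee h
  loopless := by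
    refine ⟨?_⟩
    rintro (u | e) h
    · exact hvv' u h
    · exact hee' e.1 h

instance transGraph.instDecidableAdj (G : SimpleGraph V) (Rvv : V → V → Prop)
    (Ree : Sym2 V → Sym2 V → Prop) (Rve : V → Sym2 V → Prop)
    (h1 : Symmetric Rvv) (h2 : Irreflexive Rvv) (h3 : Symmetric Ree) (h4 : Irreflexive Ree)
    [DecidableRel Rvv] [DecidableRel Ree] [∀ u e, Decidable (Rve u e)] :
    DecidableRel (transGraph G Rvv Ree Rve h1 h2 h3 h4).Adj := fun a b =>
  match a, b with
  | Sum.inl u, Sum.inl v => inferInstanceAs (Decidable (Rvv u v))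
  | Sum.inr e, Sum.inr f => inferInstanceAs (Decidable (Ree e.1 f.1))
  | Sum.inl u, Sum.inr e => inferInstanceAs (Decidable (Rve u e.1))
  | Sum.inr e, Sum.inl u => inferInstanceAs (Decidable (Rve u e.1))

/-- Two edges (as elements of `Sym2 V`) are adjacent: distinct and sharing an endpoint. -/
abbrev shareRel : Sym2 V → Sym2 V → Prop := fun e f => e ≠ f ∧ ∃ w, w ∈ e ∧ w ∈ f

lemma shareRel_symm : Symmetric (shareRel (V := V)) :=
  fun _ _ h => ⟨h.1.symm, h.2.imp fun _ hw => ⟨hw.2, hw.1⟩⟩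

lemma shareRel_irrefl : Irreflexive (shareRel (V := V)) := fun _ h => h.1 rfl

/-- Two edges are "non-adjacent": distinct and sharing no endpoint. -/
abbrev coshareRel : Sym2 V → Sym2 V → Prop := fun e f => e ≠ f ∧ ∀ w, w ∈ e → w ∉ f

lemma coshareRel_symm : Symmetric (coshareRel (V := V)) :=
  fun _ _ h => ⟨h.1.symm, fun w hf he => h.2 w he hf⟩

lemma coshareRel_irrefl : Irreflexive (coshareRel (V := V)) := fun _ h => h.1 rfl

/-- Non-adjacency of distinct vertices. -/
abbrev coAdj (G : SimpleGraph V) : V → V → Prop := fun u v => u ≠ v ∧ ¬ G.Adj u v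

lemma coAdj_symm (G : SimpleGraph V) : Symmetric (coAdj G) :=
  fun _ _ h => ⟨h.1.symm, fun ha => h.2 ha.symm⟩

lemma coAdj_irrefl (G : SimpleGraph V) : Irreflexive (coAdj G) := fun _ h => h.1 rfl

variable [Fintype V] [DecidableEq V]

/-- The semitotal-point graph `T₁(G)`: vertices adjacent as in `G`, edges never adjacent, a vertex adjacent to an edge iff incident. -/
abbrev T1 (G : SimpleGraph V) [DecidableRel G.Adj] : SimpleGraph (V ⊕ G.edgeSet) :=
  transGraph G G.Adj (fun _ _ => False) (fun u e => u ∈ e)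
    (show Symmetric G.Adj from fun _ _ h => h.symm) (show Irreflexive G.Adj from fun _ h => G.irrefl h)
    (show Symmetric (fun _ _ : Sym2 V => False) from fun _ _ h => h.elim)
    (show Irreflexive (fun _ _ : Sym2 V => False) from fun _ h => h)

lemma T1_deg_inl (G : SimpleGraph V) [DecidableRel G.Adj] (v : V) :
    (T1 G).degree (Sum.inl v) = 2 * G.degree v := by
  rw [← SimpleGraph.card_neighborSet_eq_degree]
  have e1 : (T1 G).neighborSet (Sum.inl v) ≃ G.neighborSet v ⊕ G.incidenceSet v :=
    { toFun := fun x => match x with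
        | ⟨Sum.inl u, h⟩ => Sum.inl ⟨u, h⟩
        | ⟨Sum.inr e, h⟩ => Sum.inr ⟨e.1, e.2, h⟩
      invFun := fun x => match x with
        | Sum.inl ⟨u, h⟩ => ⟨Sum.inl u, h⟩
        | Sum.inr ⟨e, he⟩ => ⟨Sum.inr ⟨e, he.1⟩, he.2⟩
      left_inv := by rintro ⟨(u | e), h⟩ <;> rfl
      right_inv := by rintro (⟨u, h⟩ | ⟨e, he⟩) <;> rfl }
  rw [Fintype.card_congr e1, Fintype.card_sum,
    SimpleGraph.card_neighborSet_eq_degree, SimpleGraph.card_incidenceSet_eq_degree]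
  ring

lemma T1_deg_inr (G : SimpleGraph V) [DecidableRel G.Adj] (e : G.edgeSet) :
    (T1 G).degree (Sum.inr e) = 2 := by
  rw [← SimpleGraph.card_neighborSet_eq_degree]
  have e1 : (T1 G).neighborSet (Sum.inr e) ≃ {u : V // u ∈ (e : Sym2 V)} :=
    { toFun := fun x => match x with
        | ⟨Sum.inl u, h⟩ => ⟨u, h⟩
        | ⟨Sum.inr f, h⟩ => h.elim
      invFun := fun x => ⟨Sum.inl x.1, x.2⟩
      left_inv := by rintro ⟨(u | f), h⟩; exacts [rfl, h.elim]
      right_inv := by rintro ⟨u, h⟩; rfl }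
  rw [Fintype.card_congr e1]
  obtain ⟨e, he⟩ := e
  induction e with
  | _ a b =>
    have hab : a ≠ b := G.ne_of_adj he
    have e2 : {u : V // u ∈ (⟨s(a, b), he⟩ : G.edgeSet).1} ≃ ({a, b} : Finset V) :=
      Equiv.subtypeEquiv (Equiv.refl V) (by intro u; simp [Sym2.mem_iff])
    rw [Fintype.card_congr e2, Fintype.card_coe, Finset.card_insert_of_notMem (by simpa),
      Finset.card_singleton]

theorem stmt_0 (G : SimpleGraph V) [DecidableRel G.Adj] :
    NK (T1 G) = 2 ^ (Fintype.card V + G.edgeFinset.card) * NK G := by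
  have hm : G.edgeFinset.card = Fintype.card G.edgeSet := Set.toFinset_card _
  unfold NK
  rw [Fintype.prod_sum_type]
  simp only [T1_deg_inl, T1_deg_inr]
  rw [Finset.prod_mul_distrib, Finset.prod_const, Finset.prod_const, Finset.card_univ,
    Finset.card_univ, hm, pow_add]
  ring
end

section
/- Let G be a finite simple graph with n vertices and m edges. Then NK(G^{+++}) = 2^n · NK(G) · Π1*(G). -/
open Finset

variable {V : Type*}

variable [Fintype V] [DecidableEq V]

/-- The total transformation graph `G^{+++}`. -/
abbrev Gppp (G : SimpleGraph V) [DecidableRel G.Adj] : SimpleGraph (V ⊕ G.edgeSet) :=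
  transGraph G G.Adj shareRel (fun u e => u ∈ e)
    (fun _ _ h => h.symm) (fun _ h => G.irrefl h) shareRel_symm shareRel_irrefl

instance Gppp.instDecidableAdj (G : SimpleGraph V) [DecidableRel G.Adj] :
    DecidableRel (Gppp G).Adj :=
  transGraph.instDecidableAdj G G.Adj shareRel (fun u e => u ∈ e) _ _ _ _


lemma degree_eq_sum {W : Type*} [Fintype W] (H : SimpleGraph W) [DecidableRel H.Adj] (x : W) :
    H.degree x = ∑ y, if H.Adj x y then 1 else 0 := by
  rw [← Finset.card_filter, ← SimpleGraph.neighborFinset_eq_filter, SimpleGraph.degree]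

lemma deg_inl (G : SimpleGraph V) [DecidableRel G.Adj] (u : V) :
    (Gppp G).degree (Sum.inl u) = 2 * G.degree u := by
  rw [degree_eq_sum, Fintype.sum_sum_type]
  have h1 : ∑ v : V, (if (Gppp G).Adj (Sum.inl u) (Sum.inl v) then 1 else 0) = G.degree u := by
    rw [degree_eq_sum]
    exact Finset.sum_congr rfl fun v _ => if_congr Iff.rfl rfl rfl
  have h2 : ∑ e : G.edgeSet, (if (Gppp G).Adj (Sum.inl u) (Sum.inr e) then 1 else 0)
      = G.degree u := by
    have e1 : ∑ e : G.edgeSet, (if (Gppp G).Adj (Sum.inl u) (Sum.inr e) then 1 else 0)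
        = ∑ e : G.edgeSet, (if u ∈ e.1 then (1:ℕ) else 0) :=
      Finset.sum_congr rfl fun e _ => if_congr Iff.rfl rfl rfl
    have e2 : ∑ e ∈ G.edgeFinset, (if u ∈ e then (1:ℕ) else 0)
        = ∑ e : G.edgeSet, (if u ∈ e.1 then (1:ℕ) else 0) :=
      Finset.sum_subtype G.edgeFinset (fun x => SimpleGraph.mem_edgeFinset) _
    rw [e1, ← e2, ← Finset.card_filter, ← SimpleGraph.incidenceFinset_eq_filter,
      SimpleGraph.card_incidenceFinset_eq_degree]
  rw [h1, h2]; ring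

lemma deg_inr (G : SimpleGraph V) [DecidableRel G.Adj] (e : G.edgeSet) :
    (Gppp G).degree (Sum.inr e) =
      Sym2.lift ⟨fun u v => G.degree u + G.degree v, fun u v => by simp [Nat.add_comm]⟩ e.1 := by
  obtain ⟨e, he⟩ := e
  revert he
  induction e using Sym2.ind with
  | _ a b =>
    intro he
    have hadj : G.Adj a b := G.mem_edgeSet.mp he
    have hab : a ≠ b := hadj.ne
    rw [degree_eq_sum, Fintype.sum_sum_type]
    have h1 : ∑ v : V, (if (Gppp G).Adj (Sum.inr ⟨s(a,b), he⟩) (Sum.inl v) then 1 else 0)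
        = 2 := by
      have e1 : ∑ v : V, (if (Gppp G).Adj (Sum.inr ⟨s(a,b), he⟩) (Sum.inl v) then 1 else 0)
          = ∑ v : V, (if v ∈ (s(a,b) : Sym2 V) then (1:ℕ) else 0) :=
        Finset.sum_congr rfl fun v _ => if_congr Iff.rfl rfl rfl
      rw [e1, ← Finset.card_filter]
      have : (Finset.univ.filter fun v => v ∈ (s(a,b) : Sym2 V)) = {a, b} := by
        ext v; simp [Sym2.mem_iff]
      rw [this, Finset.card_insert_of_notMem (by simpa using hab), Finset.card_singleton]
    have h2 : ∑ f : G.edgeSet,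
        (if (Gppp G).Adj (Sum.inr ⟨s(a,b), he⟩) (Sum.inr f) then 1 else 0)
        = ((G.incidenceFinset a ∪ G.incidenceFinset b).erase s(a,b)).card := by
      have e1 : ∑ f : G.edgeSet,
          (if (Gppp G).Adj (Sum.inr ⟨s(a,b), he⟩) (Sum.inr f) then 1 else 0)
          = ∑ f : G.edgeSet, (if shareRel (s(a,b)) f.1 then (1:ℕ) else 0) :=
        Finset.sum_congr rfl fun f _ => if_congr Iff.rfl rfl rfl
      have e2 : ∑ f ∈ G.edgeFinset, (if shareRel (s(a,b)) f then (1:ℕ) else 0)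
          = ∑ f : G.edgeSet, (if shareRel (s(a,b)) f.1 then (1:ℕ) else 0) :=
        Finset.sum_subtype G.edgeFinset (fun x => SimpleGraph.mem_edgeFinset) _
      rw [e1, ← e2, ← Finset.card_filter]
      congr 1
      ext f
      simp only [Finset.mem_filter, SimpleGraph.mem_edgeFinset, Finset.mem_erase,
        Finset.mem_union, SimpleGraph.incidenceFinset_eq_filter, shareRel, Sym2.mem_iff,
        ne_eq]
      constructor
      · rintro ⟨hf, hne, w, (rfl | rfl), hw⟩
        · exact ⟨fun h => hne h.symm, Or.inl ⟨hf, hw⟩⟩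
        · exact ⟨fun h => hne h.symm, Or.inr ⟨hf, hw⟩⟩
      · rintro ⟨hne, (⟨hf, hw⟩ | ⟨hf, hw⟩)⟩
        · exact ⟨hf, fun h => hne h.symm, a, Or.inl rfl, hw⟩
        · exact ⟨hf, fun h => hne h.symm, b, Or.inr rfl, hw⟩
    have hinter : G.incidenceFinset a ∩ G.incidenceFinset b = {s(a,b)} := by
      ext f
      simp only [Finset.mem_inter, SimpleGraph.incidenceFinset_eq_filter, Finset.mem_filter,
        SimpleGraph.mem_edgeFinset, Finset.mem_singleton]
      constructor
      · rintro ⟨⟨hf, haf⟩, ⟨-, hbf⟩⟩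
        exact (Sym2.mem_and_mem_iff hab).mp ⟨haf, hbf⟩
      · rintro rfl
        exact ⟨⟨he, Sym2.mem_mk_left a b⟩, ⟨he, Sym2.mem_mk_right a b⟩⟩
    have hmem : s(a,b) ∈ G.incidenceFinset a ∪ G.incidenceFinset b := by
      apply Finset.mem_union_left
      rw [SimpleGraph.incidenceFinset_eq_filter]
      exact Finset.mem_filter.mpr ⟨SimpleGraph.mem_edgeFinset.mpr he, Sym2.mem_mk_left a b⟩
    have hcu := Finset.card_union_add_card_inter (G.incidenceFinset a) (G.incidenceFinset b)
    rw [hinter, Finset.card_singleton, SimpleGraph.card_incidenceFinset_eq_degree,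
      SimpleGraph.card_incidenceFinset_eq_degree] at hcu
    have hce := Finset.card_erase_add_one hmem
    rw [h1, h2]
    have hl : Sym2.lift ⟨fun u v => G.degree u + G.degree v, fun u v => by simp [Nat.add_comm]⟩
        (s(a,b)) = G.degree a + G.degree b := rfl
    rw [hl]
    omega

theorem stmt_6 (G : SimpleGraph V) [DecidableRel G.Adj] :
    NK (Gppp G) = 2 ^ Fintype.card V * NK G * Pi1Star G := by
  rw [NK, Fintype.prod_sum_type]
  have h1 : ∏ u : V, (Gppp G).degree (Sum.inl u) = 2 ^ Fintype.card V * NK G := by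
    simp only [deg_inl]
    rw [Finset.prod_mul_distrib, Finset.prod_const, Finset.card_univ, NK]
  have h2 : ∏ e : G.edgeSet, (Gppp G).degree (Sum.inr e) = Pi1Star G := by
    simp only [deg_inr]
    rw [Pi1Star]
    exact (Finset.prod_subtype G.edgeFinset (fun x => SimpleGraph.mem_edgeFinset) _).symm
  rw [h1, h2]
end

section
/- Let G be a finite simple graph with n vertices and m ≥ 1 edges. Then, as real numbers, NK(G^{++-}) ≤ m^n · (M1(G)/m + (n-4))^m; moreover, equality holds if G is regular. -/
open Finset

variable {V : Type*}

variable [Fintype V] [DecidableEq V]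

/-- The total transformation graph `G^{++-}`. -/
abbrev Gppm (G : SimpleGraph V) [DecidableRel G.Adj] : SimpleGraph (V ⊕ G.edgeSet) :=
  transGraph G G.Adj shareRel (fun u e => u ∉ e)
    (fun _ _ h => h.symm) (fun _ h => h.ne rfl) shareRel_symm shareRel_irrefl

instance Gppm.instDecidableAdj (G : SimpleGraph V) [DecidableRel G.Adj] :
    DecidableRel (Gppm G).Adj :=
  transGraph.instDecidableAdj _ _ _ _ _ _ _ _


open SimpleGraph in
lemma neighborFinset_inl (G : SimpleGraph V) [DecidableRel G.Adj] (v : V) :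
    (Gppm G).neighborFinset (Sum.inl v) =
      (G.neighborFinset v).disjSum (univ.filter fun e : G.edgeSet => v ∉ e.1) := by
  ext a
  rcases a with u | e
  · rw [SimpleGraph.mem_neighborFinset]; simp [Gppm, transGraph]
  · rw [SimpleGraph.mem_neighborFinset]; simp [Gppm, transGraph]

open SimpleGraph in
lemma card_subtype_filter (G : SimpleGraph V) [DecidableRel G.Adj]
    (p : Sym2 V → Prop) [DecidablePred p] :
    (univ.filter fun f : G.edgeSet => p f.1).card = (G.edgeFinset.filter p).card := by
  apply Finset.card_bij (fun f _ => f.1)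
  · intro f hf
    simp only [mem_filter, mem_univ, true_and] at hf
    simp [mem_filter, SimpleGraph.mem_edgeFinset, f.2, hf]
  · intro f hf g hg h
    exact Subtype.ext h
  · intro f hf
    simp only [mem_filter, SimpleGraph.mem_edgeFinset] at hf
    exact ⟨⟨f, hf.1⟩, by simp [hf.2], rfl⟩

open SimpleGraph in
lemma degree_inl (G : SimpleGraph V) [DecidableRel G.Adj] (v : V) :
    (Gppm G).degree (Sum.inl v) = G.edgeFinset.card := by
  classical
  rw [← SimpleGraph.card_neighborFinset_eq_degree, neighborFinset_inl, Finset.card_disjSum]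
  rw [card_subtype_filter G (fun e => v ∉ e)]
  have h1 : (G.edgeFinset.filter fun e => v ∈ e) = G.incidenceFinset v := by
    rw [SimpleGraph.incidenceFinset_eq_filter]
  have h2 := Finset.card_filter_add_card_filter_not
    (s := G.edgeFinset) (p := fun e => v ∈ e)
  rw [h1] at h2
  rw [SimpleGraph.card_incidenceFinset_eq_degree] at h2
  have h3 : #(G.neighborFinset v) = G.degree v := G.card_neighborFinset_eq_degree v
  rw [h3]
  omega


lemma amgm {ι : Type*} (s : Finset ι) (z : ι → ℝ) (hz : ∀ i ∈ s, 0 ≤ z i) (hs : 0 < s.card) :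
    ∏ i ∈ s, z i ≤ ((∑ i ∈ s, z i) / s.card) ^ s.card := by
  have hm : (0:ℝ) < s.card := by exact_mod_cast hs
  have h := Real.geom_mean_le_arith_mean_weighted s (fun _ => (s.card:ℝ)⁻¹) z
    (fun i _ => by positivity) (by rw [Finset.sum_const, nsmul_eq_mul]; exact mul_inv_cancel₀ (ne_of_gt hm)) hz
  have hL : (∏ i ∈ s, z i ^ ((s.card:ℝ)⁻¹)) = (∏ i ∈ s, z i) ^ ((s.card:ℝ)⁻¹) :=
    Real.finset_prod_rpow s z hz _
  have hR : ∑ i ∈ s, (s.card:ℝ)⁻¹ * z i = (∑ i ∈ s, z i) / s.card := by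
    rw [← Finset.mul_sum]; ring
  rw [hL, hR] at h
  have hP : (0:ℝ) ≤ ∏ i ∈ s, z i := Finset.prod_nonneg hz
  calc ∏ i ∈ s, z i = ((∏ i ∈ s, z i) ^ ((s.card:ℝ)⁻¹)) ^ (s.card : ℕ) := by
        rw [← Real.rpow_natCast ((∏ i ∈ s, z i) ^ ((s.card:ℝ)⁻¹)) s.card, ← Real.rpow_mul hP,
          inv_mul_cancel₀ (ne_of_gt hm), Real.rpow_one]
    _ ≤ _ := pow_le_pow_left₀ (Real.rpow_nonneg hP _) h _

lemma card_not_mem_sym2 {u v : V} (hne : u ≠ v) :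
    (univ.filter fun w : V => w ∉ (s(u,v) : Sym2 V)).card + 2 = Fintype.card V := by
  have h1 : (univ.filter fun w : V => w ∈ (s(u,v) : Sym2 V)) = {u, v} := by
    ext w; simp [Sym2.mem_iff]
  have h2 := Finset.card_filter_add_card_filter_not
    (s := (univ : Finset V)) (p := fun w => w ∈ (s(u,v) : Sym2 V))
  rw [h1, Finset.card_insert_of_notMem (by simp [hne]), card_singleton, Finset.card_univ] at h2
  omega

open SimpleGraph in
lemma card_share_edges (G : SimpleGraph V) [DecidableRel G.Adj] {u v : V} (h : G.Adj u v) :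
    (G.edgeFinset.filter fun f => shareRel (s(u,v)) f).card + 2 = G.degree u + G.degree v := by
  have hset : (G.edgeFinset.filter fun f => shareRel (s(u,v)) f)
      = (G.incidenceFinset u ∪ G.incidenceFinset v).erase s(u,v) := by
    ext f
    simp only [mem_filter, SimpleGraph.mem_edgeFinset, Finset.mem_erase, Finset.mem_union,
      SimpleGraph.mem_incidenceFinset, SimpleGraph.incidenceSet, Set.mem_setOf_eq, shareRel,
      Sym2.mem_iff]
    constructor
    · rintro ⟨hf, hne, w, (rfl | rfl), hw⟩
      · exact ⟨fun he => hne he.symm, Or.inl ⟨hf, hw⟩⟩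
      · exact ⟨fun he => hne he.symm, Or.inr ⟨hf, hw⟩⟩
    · rintro ⟨hne, (⟨hf, hw⟩ | ⟨hf, hw⟩)⟩
      · exact ⟨hf, fun he => hne he.symm, u, Or.inl rfl, hw⟩
      · exact ⟨hf, fun he => hne he.symm, v, Or.inr rfl, hw⟩
  have hmem : s(u,v) ∈ G.incidenceFinset u ∪ G.incidenceFinset v := by
    apply Finset.mem_union_left
    rw [SimpleGraph.mem_incidenceFinset]
    exact ⟨G.mem_edgeSet.2 h, by simp⟩
  have hint : G.incidenceFinset u ∩ G.incidenceFinset v = {s(u,v)} := by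
    ext f
    rw [Finset.mem_inter, SimpleGraph.mem_incidenceFinset, SimpleGraph.mem_incidenceFinset,
      ← Set.mem_inter_iff, G.incidenceSet_inter_incidenceSet_of_adj h]
    simp
  have hui := Finset.card_union_add_card_inter (G.incidenceFinset u) (G.incidenceFinset v)
  rw [hint, card_singleton, SimpleGraph.card_incidenceFinset_eq_degree,
    SimpleGraph.card_incidenceFinset_eq_degree] at hui
  rw [hset, Finset.card_erase_of_mem hmem]
  have hpos : 0 < (G.incidenceFinset u ∪ G.incidenceFinset v).card :=
    Finset.card_pos.2 ⟨_, hmem⟩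
  omega

open SimpleGraph in
lemma neighborFinset_inr (G : SimpleGraph V) [DecidableRel G.Adj] (e : G.edgeSet) :
    (Gppm G).neighborFinset (Sum.inr e) =
      (univ.filter fun u : V => u ∉ e.1).disjSum
        (univ.filter fun f : G.edgeSet => shareRel e.1 f.1) := by
  ext a
  rcases a with u | f
  · rw [SimpleGraph.mem_neighborFinset]; simp [Gppm, transGraph]
  · rw [SimpleGraph.mem_neighborFinset]; simp [Gppm, transGraph]

/-- Sum of endpoint degrees of an edge. -/
def DeAux (G : SimpleGraph V) [DecidableRel G.Adj] : Sym2 V → ℕ :=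
  Sym2.lift ⟨fun u v => G.degree u + G.degree v, fun u v => by simp [Nat.add_comm]⟩

@[simp] lemma DeAux_mk (G : SimpleGraph V) [DecidableRel G.Adj] (u v : V) :
    DeAux G s(u,v) = G.degree u + G.degree v := rfl

open SimpleGraph in
lemma degree_inr (G : SimpleGraph V) [DecidableRel G.Adj] (e : G.edgeSet) :
    (Gppm G).degree (Sum.inr e) + 4 = DeAux G e.1 + Fintype.card V := by
  obtain ⟨e, he⟩ := e
  induction e with
  | _ u v =>
    have h : G.Adj u v := G.mem_edgeSet.1 he
    rw [← SimpleGraph.card_neighborFinset_eq_degree, neighborFinset_inr, Finset.card_disjSum]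
    rw [card_subtype_filter G (fun f => shareRel (s(u,v)) f)]
    have h1 := card_share_edges G h
    have h2 := card_not_mem_sym2 h.ne
    simp only [DeAux_mk]
    omega

open SimpleGraph in
lemma zagreb (G : SimpleGraph V) [DecidableRel G.Adj] :
    ∑ e ∈ G.edgeFinset, DeAux G e = M1 G := by
  have h1 : ∑ d : G.Dart, G.degree d.fst = M1 G := by
    rw [M1, ← Finset.sum_fiberwise_of_maps_to (g := fun d : G.Dart => d.fst)
      (fun d _ => Finset.mem_univ d.fst)]
    refine Finset.sum_congr rfl fun v _ => ?_
    rw [Finset.sum_congr rfl (fun d hd => by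
      rw [(Finset.mem_filter.1 hd).2]), Finset.sum_const, smul_eq_mul]
    rw [G.dart_fst_fiber_card_eq_degree v, sq]
  rw [← h1, ← Finset.sum_fiberwise_of_maps_to (g := fun d : G.Dart => d.edge)
    (fun d _ => SimpleGraph.mem_edgeFinset.2 d.edge_mem)]
  refine Finset.sum_congr rfl fun e hemem => ?_
  have he : e ∈ G.edgeSet := SimpleGraph.mem_edgeFinset.1 hemem
  induction e with
  | _ u v =>
    let d : G.Dart := ⟨(u, v), G.mem_edgeSet.1 he⟩
    have hfib : (univ.filter fun d' : G.Dart => d'.edge = s(u,v)) = {d, d.symm} := by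
      have := d.edge_fiber
      exact this
    rw [hfib, Finset.sum_pair (Ne.symm d.symm_ne)]
    simp [DeAux_mk]
    rfl

theorem stmt_9 (G : SimpleGraph V) [DecidableRel G.Adj]
    (hm : 1 ≤ G.edgeFinset.card) :
    (NK (Gppm G) : ℝ) ≤ (G.edgeFinset.card : ℝ) ^ Fintype.card V * ((M1 G : ℝ) / G.edgeFinset.card + ((Fintype.card V : ℝ) - 4)) ^ G.edgeFinset.card ∧
      ((∃ r, G.IsRegularOfDegree r) → (NK (Gppm G) : ℝ) = (G.edgeFinset.card : ℝ) ^ Fintype.card V * ((M1 G : ℝ) / G.edgeFinset.card + ((Fintype.card V : ℝ) - 4)) ^ G.edgeFinset.card) := by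
  classical
  have hm0 : (0:ℝ) < (G.edgeFinset.card : ℝ) := by exact_mod_cast hm
  set x : Sym2 V → ℝ := fun e => (DeAux G e : ℝ) + (Fintype.card V : ℝ) - 4 with hxdef
  have hdeg : ∀ e : G.edgeSet, ((Gppm G).degree (Sum.inr e) : ℝ) = x e.1 := by
    intro e
    have h := degree_inr G e
    have h' : ((Gppm G).degree (Sum.inr e) : ℝ) + 4
        = (DeAux G e.1 : ℝ) + (Fintype.card V : ℝ) := by exact_mod_cast h
    show ((Gppm G).degree (Sum.inr e) : ℝ) = (DeAux G (e : Sym2 V) : ℝ) + (Fintype.card V : ℝ) - 4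
    linarith
  have hNK : (NK (Gppm G) : ℝ)
      = (G.edgeFinset.card : ℝ) ^ Fintype.card V * ∏ e ∈ G.edgeFinset, x e := by
    rw [NK, Fintype.prod_sum_type, Nat.cast_mul, Nat.cast_prod, Nat.cast_prod]
    congr 1
    · rw [Finset.prod_congr rfl (fun v _ => by rw [degree_inl] :
        ∀ v ∈ (univ : Finset V), (((Gppm G).degree (Sum.inl v) : ℕ) : ℝ)
          = (G.edgeFinset.card : ℝ)), Finset.prod_const, Finset.card_univ]
    · rw [Finset.prod_congr rfl (fun e _ => hdeg e)]
      exact (Finset.prod_subtype G.edgeFinset (fun e => SimpleGraph.mem_edgeFinset) x).symm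
  have hx0 : ∀ e ∈ G.edgeFinset, 0 ≤ x e := by
    intro e he
    have := hdeg ⟨e, SimpleGraph.mem_edgeFinset.1 he⟩
    rw [← this]
    positivity
  have hsumDe : ∑ e ∈ G.edgeFinset, (DeAux G e : ℝ) = (M1 G : ℝ) := by
    rw [← Nat.cast_sum, zagreb G]
  have hsum : ∑ e ∈ G.edgeFinset, x e
      = (M1 G : ℝ) + (G.edgeFinset.card : ℝ) * ((Fintype.card V : ℝ) - 4) := by
    rw [hxdef]
    rw [Finset.sum_congr rfl (fun e _ => by ring :
      ∀ e ∈ G.edgeFinset, (DeAux G e : ℝ) + (Fintype.card V : ℝ) - 4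
        = (DeAux G e : ℝ) + ((Fintype.card V : ℝ) - 4))]
    rw [Finset.sum_add_distrib, Finset.sum_const, nsmul_eq_mul, hsumDe]
  have havg : (∑ e ∈ G.edgeFinset, x e) / (G.edgeFinset.card : ℝ)
      = (M1 G : ℝ) / (G.edgeFinset.card : ℝ) + ((Fintype.card V : ℝ) - 4) := by
    rw [hsum, add_div, mul_div_cancel_left₀ _ (ne_of_gt hm0)]
  have hineq := amgm G.edgeFinset x hx0 hm
  rw [havg] at hineq
  refine ⟨?_, ?_⟩
  · rw [hNK]
    exact mul_le_mul_of_nonneg_left hineq (by positivity)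
  · rintro ⟨r, hreg⟩
    have hxc : ∀ e ∈ G.edgeFinset, x e
        = 2*(r:ℝ) + ((Fintype.card V : ℝ) - 4) := by
      intro e he
      induction e with
      | _ u v =>
        rw [hxdef]
        simp only [DeAux_mk, hreg u, hreg v]
        push_cast
        ring
    have hDe2 : ∀ e ∈ G.edgeFinset, (DeAux G e : ℝ) = 2*(r:ℝ) := by
      intro e he
      induction e with
      | _ u v =>
        simp only [DeAux_mk, hreg u, hreg v]
        push_cast
        ring
    have hM1 : (M1 G : ℝ) = (G.edgeFinset.card : ℝ) * (2*(r:ℝ)) := by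
      rw [← hsumDe, Finset.sum_congr rfl hDe2, Finset.sum_const, nsmul_eq_mul]
    rw [hNK, Finset.prod_congr rfl hxc, Finset.prod_const, hM1,
      mul_div_cancel_left₀ _ (ne_of_gt hm0)]
end
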